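/- For fixed x > 0 and θ ∈ [0, π], the limit as y → ∞ of arcosh(cosh(x)·cosh(y) − sinh(x)·sinh(y)·cos(θ)) − y equals log(cosh(x) − sinh(x)·cos(θ)). -/
import Mathlib


noncomputable def arcosh (x : ℝ) : ℝ := Real.log (x + Real.sqrt (x ^ 2 - 1))

theorem f_limit (x θ : ℝ) (hx : 0 < x) (hθ : θ ∈ Set.Icc 0 Real.pi) :
    Filter.Tendsto (fun y : ℝ =>
      arcosh (Real.cosh x * Real.cosh y - Real.sinh x * Real.sinh y * Real.cos θ) - y)
      Filter.atTop
      (nhds (Real.log (Real.cosh x - Real.sinh x * Real.cos θ))) := by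
  set c := Real.cosh x - Real.sinh x * Real.cos θ with hc_def
  set d := Real.cosh x + Real.sinh x * Real.cos θ with hd_def
  have hsinh : 0 ≤ Real.sinh x := (Real.sinh_pos_iff.mpr hx).le
  have hc : 0 < c := by
    have h1 : Real.sinh x * Real.cos θ ≤ Real.sinh x := by
      nlinarith [Real.cos_le_one θ]
    have h2 : Real.cosh x - Real.sinh x = Real.exp (-x) := Real.cosh_sub_sinh x
    have h3 : 0 < Real.exp (-x) := Real.exp_pos _
    simp only [hc_def]; linarith
  set u : ℝ → ℝ := fun y =>
    Real.cosh x * Real.cosh y - Real.sinh x * Real.sinh y * Real.cos θ with hu_def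
  have key1 : ∀ y, u y * Real.exp (-y) = c / 2 + d / 2 * (Real.exp (-y)) ^ 2 := by
    intro y
    simp only [hu_def, hc_def, hd_def, Real.cosh_eq, Real.sinh_eq, Real.exp_neg]
    have h := Real.exp_ne_zero y
    field_simp
    ring
  have hexp : Filter.Tendsto (fun y : ℝ => Real.exp (-y)) Filter.atTop (nhds 0) :=
    Real.tendsto_exp_neg_atTop_nhds_zero
  have htend1 : Filter.Tendsto (fun y => u y * Real.exp (-y)) Filter.atTop (nhds (c / 2)) := by
    have : Filter.Tendsto (fun y : ℝ => c / 2 + d / 2 * (Real.exp (-y)) ^ 2)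
        Filter.atTop (nhds (c / 2 + d / 2 * 0 ^ 2)) :=
      Filter.Tendsto.const_add _ (Filter.Tendsto.const_mul _ (hexp.pow 2))
    simpa [key1] using this
  have key2 : ∀ y, Real.sqrt ((u y) ^ 2 - 1) * Real.exp (-y) =
      Real.sqrt ((u y * Real.exp (-y)) ^ 2 - (Real.exp (-y)) ^ 2) := by
    intro y
    have h1 : (u y * Real.exp (-y)) ^ 2 - (Real.exp (-y)) ^ 2 =
        ((u y) ^ 2 - 1) * (Real.exp (-y)) ^ 2 := by ring
    rw [h1, Real.sqrt_mul' _ (sq_nonneg _), Real.sqrt_sq (Real.exp_nonneg _)]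
  have htend2 : Filter.Tendsto (fun y => Real.sqrt ((u y) ^ 2 - 1) * Real.exp (-y))
      Filter.atTop (nhds (c / 2)) := by
    have hin : Filter.Tendsto (fun y => (u y * Real.exp (-y)) ^ 2 - (Real.exp (-y)) ^ 2)
        Filter.atTop (nhds ((c / 2) ^ 2 - 0 ^ 2)) :=
      Filter.Tendsto.sub (htend1.pow 2) (hexp.pow 2)
    have hsq : Filter.Tendsto (fun y => Real.sqrt ((u y * Real.exp (-y)) ^ 2 - (Real.exp (-y)) ^ 2))
        Filter.atTop (nhds (Real.sqrt ((c / 2) ^ 2 - 0 ^ 2))) :=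
      (Real.continuous_sqrt.continuousAt).tendsto.comp hin
    have : Real.sqrt ((c / 2) ^ 2 - 0 ^ 2) = c / 2 := by
      rw [show (c / 2) ^ 2 - 0 ^ 2 = (c / 2) ^ 2 by ring, Real.sqrt_sq (by linarith)]
    rw [this] at hsq
    simpa [key2] using hsq
  have htend3 : Filter.Tendsto
      (fun y => (u y + Real.sqrt ((u y) ^ 2 - 1)) * Real.exp (-y))
      Filter.atTop (nhds c) := by
    have := htend1.add htend2
    have hcc : c / 2 + c / 2 = c := by ring
    rw [hcc] at this
    exact this.congr (fun y => by ring)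
  have hlog : Filter.Tendsto
      (fun y => Real.log ((u y + Real.sqrt ((u y) ^ 2 - 1)) * Real.exp (-y)))
      Filter.atTop (nhds (Real.log c)) :=
    (Real.continuousAt_log hc.ne').tendsto.comp htend3
  have hpos : ∀ᶠ y in Filter.atTop, 0 < u y := by
    have h := htend1.eventually (eventually_gt_nhds (by linarith : (0:ℝ) < c / 2))
    filter_upwards [h] with y hy
    nlinarith [Real.exp_pos (-y)]
  refine hlog.congr' ?_
  filter_upwards [hpos] with y hy
  have hupos : 0 < u y + Real.sqrt ((u y) ^ 2 - 1) := by
    have := Real.sqrt_nonneg ((u y) ^ 2 - 1); linarith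
  rw [Real.log_mul hupos.ne' (Real.exp_ne_zero _), Real.log_exp]
  simp only [arcosh, hu_def]
  ring
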